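/- Let h(z) = ∑_{k=0}^∞ a_k z^k and g(z) = ∑_{k=1}^∞ b_k z^k be analytic on the unit disk 𝔻 with g(0) = 0, and suppose the harmonic mapping f(z) = h(z) + conj(g(z)) satisfies |f(z)| ≤ 1 for all z ∈ 𝔻. Then for every real p ≥ 1 and every r with 0 ≤ r < 1, ∑_{k=1}^∞ (|a_k|^p + |b_k|^p)^{1/p} · r^k ≤ max{2^{(1/p) − 1/2}, 1} · √(1 − |a_0|²) · r/√(1 − r²). -/

import Mathlib

open MeasureTheory Complex AddCircle
open scoped NNReal

lemma fourier_npow (k : ℕ) (θ : AddCircle (1:ℝ)) :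
    fourier (k : ℤ) θ = (fourier 1 θ) ^ k := by
  induction k with
  | zero => simp [fourier_zero]
  | succ n ih => push_cast; rw [fourier_add, ih, pow_succ]

lemma fourier_norm_one (n : ℤ) (θ : AddCircle (1:ℝ)) : ‖fourier n θ‖ = 1 := by
  rw [fourier_apply]; exact Circle.norm_coe _

lemma fourierCoeff_hasSum {c : ℕ → ℂ}
    {S : C(AddCircle (1:ℝ), ℂ)} (hS : HasSum (fun k => c k • (fourier (k:ℤ) : C(AddCircle (1:ℝ), ℂ))) S)
    (n : ℤ) :
    fourierCoeff (⇑S) n = if 0 ≤ n then c n.toNat else 0 := by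
  haveI : Fact ((0:ℝ) < 1) := ⟨one_pos⟩
  have h1 : fourierCoeff (⇑S) n
      = fourierCoeff (ContinuousMap.toLp (E := ℂ) 2 haarAddCircle ℂ S) n :=
    (fourierCoeff_toLp S n).symm
  rw [h1, ← fourierBasis_repr, fourierBasis.repr_apply_apply, coe_fourierBasis]
  have h2 : HasSum (fun k : ℕ => c k • fourierLp (T := 1) 2 (k:ℤ))
      (ContinuousMap.toLp (E := ℂ) 2 haarAddCircle ℂ S) := by
    have := hS.mapL (ContinuousMap.toLp (E := ℂ) 2 haarAddCircle ℂ)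
    simpa using this
  have h3 := h2.mapL (innerSL ℂ (fourierLp (T := 1) 2 n))
  simp only [innerSL_apply_apply] at h3
  have h4 : ∀ k : ℕ, inner (𝕜 := ℂ) (fourierLp (T := 1) 2 n) (c k • fourierLp (T := 1) 2 (k:ℤ))
      = if (k : ℤ) = n then c k else 0 := by
    intro k
    rw [inner_smul_right]
    rw [(orthonormal_iff_ite.mp (orthonormal_fourier (T := 1))) n k]
    by_cases hk : (n : ℤ) = k
    · simp [hk]
    · have : ¬ ((k:ℤ) = n) := fun hh => hk hh.symm
      simp [hk, this]
  rw [(funext h4 : _)] at h3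
  by_cases hn : 0 ≤ n
  · obtain ⟨m, rfl⟩ := Int.eq_ofNat_of_zero_le hn
    have h5 : HasSum (fun k : ℕ => if (k:ℤ) = (m:ℤ) then c k else 0) (c m) := by
      have he : ∀ k : ℕ, (if (k:ℤ) = (m:ℤ) then c k else 0) = if k = m then c m else 0 := by
        intro k; by_cases hk : k = m <;> simp [hk]
      rw [(funext he : _)]
      exact hasSum_ite_eq m (c m)
    rw [h3.unique h5]; simp
  · have h5 : HasSum (fun k : ℕ => if (k:ℤ) = n then c k else 0) 0 := by
      have he : ∀ k : ℕ, (if (k:ℤ) = n then c k else 0) = 0 := by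
        intro k; have : ¬ ((k:ℤ) = n) := by omega
        simp [this]
      rw [(funext he : _)]
      exact hasSum_zero
    rw [h3.unique h5]; simp [hn]

lemma bessel_main (a b : ℕ → ℂ) (h g : ℂ → ℂ)
    (hh : ∀ z : ℂ, ‖z‖ < 1 → HasSum (fun k : ℕ => a k * z ^ k) (h z))
    (hg : ∀ z : ℂ, ‖z‖ < 1 → HasSum (fun k : ℕ => b k * z ^ k) (g z))
    (hb0 : b 0 = 0)
    (hbound : ∀ z : ℂ, ‖z‖ < 1 → ‖h z + (starRingEnd ℂ) (g z)‖ ≤ 1)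
    {ρ : ℝ} (hρ0 : 0 ≤ ρ) (hρ1 : ρ < 1) :
    ∃ e : ℤ → ℝ, (∀ n, 0 ≤ e n) ∧ Summable e ∧ (∑' n, e n) ≤ 1 ∧
      (∀ k : ℕ, e (k : ℤ) = (‖a k‖ * ρ ^ k) ^ 2) ∧
      (∀ k : ℕ, e (-(k:ℤ) - 1) = (‖b (k+1)‖ * ρ ^ (k+1)) ^ 2) := by
  haveI : Fact ((0:ℝ) < 1) := ⟨one_pos⟩
  have hρc : ‖(ρ:ℂ)‖ < 1 := by rw [Complex.norm_real, Real.norm_eq_abs, _root_.abs_of_nonneg hρ0]; exact hρ1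
  set ca : ℕ → ℂ := fun k => a k * (ρ:ℂ)^k with hca
  set cb : ℕ → ℂ := fun k => b k * (ρ:ℂ)^k with hcb
  have hsa : Summable ca := (hh _ hρc).summable
  have hsb : Summable cb := (hg _ hρc).summable
  -- summability in C(AddCircle 1, ℂ)
  have hnorm : ∀ (c : ℕ → ℂ), Summable c →
      Summable (fun k => c k • (fourier (k:ℤ) : C(AddCircle (1:ℝ), ℂ))) := by
    intro c hc
    apply Summable.of_norm
    have he : ∀ k : ℕ, ‖c k • (fourier (k:ℤ) : C(AddCircle (1:ℝ), ℂ))‖ = ‖c k‖ := by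
      intro k; rw [norm_smul, fourier_norm, mul_one]
    rw [(funext he : _)]
    exact summable_norm_iff.mpr hc
  obtain ⟨Sa, hSa⟩ := hnorm ca hsa
  obtain ⟨Sb, hSb⟩ := hnorm cb hsb
  -- pointwise identification
  have hzlt : ∀ θ : AddCircle (1:ℝ), ‖(ρ:ℂ) * fourier 1 θ‖ < 1 := by
    intro θ
    rw [norm_mul, fourier_norm_one, mul_one, Complex.norm_real, Real.norm_eq_abs, _root_.abs_of_nonneg hρ0]
    exact hρ1
  have hpt : ∀ (c : ℕ → ℂ) (S : C(AddCircle (1:ℝ), ℂ)),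
      HasSum (fun k => c k • (fourier (k:ℤ) : C(AddCircle (1:ℝ), ℂ))) S →
      ∀ θ, HasSum (fun k : ℕ => c k * fourier (k:ℤ) θ) (S θ) := by
    intro c S hS θ
    have := hS.mapL (ContinuousMap.evalCLM ℂ θ)
    simpa [ContinuousMap.evalCLM, smul_eq_mul] using this
  have hSaθ : ∀ θ, Sa θ = h ((ρ:ℂ) * fourier 1 θ) := by
    intro θ
    have h1 := hh _ (hzlt θ)
    have h2 := hpt ca Sa hSa θ
    have he : (fun k : ℕ => a k * ((ρ:ℂ) * fourier 1 θ) ^ k)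
        = fun k : ℕ => ca k * fourier (k:ℤ) θ := by
      funext k; rw [fourier_npow, hca, mul_pow]; ring
    rw [he] at h1
    exact h2.unique h1
  have hSbθ : ∀ θ, Sb θ = g ((ρ:ℂ) * fourier 1 θ) := by
    intro θ
    have h1 := hg _ (hzlt θ)
    have h2 := hpt cb Sb hSb θ
    have he : (fun k : ℕ => b k * ((ρ:ℂ) * fourier 1 θ) ^ k)
        = fun k : ℕ => cb k * fourier (k:ℤ) θ := by
      funext k; rw [fourier_npow, hcb, mul_pow]; ring
    rw [he] at h1
    exact h2.unique h1
  set F : C(AddCircle (1:ℝ), ℂ) := Sa + star Sb with hF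
  have hFθ : ∀ θ, F θ = Sa θ + (starRingEnd ℂ) (Sb θ) := by
    intro θ; rfl
  have hFb : ∀ θ, ‖F θ‖ ≤ 1 := by
    intro θ
    rw [hFθ θ, hSaθ θ, hSbθ θ]
    exact hbound _ (hzlt θ)
  set f2 := ContinuousMap.toLp (E := ℂ) 2 haarAddCircle ℂ F with hf2def
  have hf2 : ‖f2‖ ≤ 1 := by
    have h1 := (ContinuousMap.toLp (E := ℂ) 2 haarAddCircle ℂ).le_opNorm F
    have h2 := ContinuousMap.toLp_norm_le (α := AddCircle (1:ℝ)) (E := ℂ) (p := 2) (𝕜 := ℂ)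
      haarAddCircle
    have h3 : measureUnivNNReal (haarAddCircle (T := 1)) = 1 := by
      simp [measureUnivNNReal, measure_univ]
    rw [h3] at h2
    norm_num at h2
    have h4 : ‖F‖ ≤ 1 := (ContinuousMap.norm_le _ zero_le_one).mpr hFb
    calc ‖f2‖ ≤ _ * ‖F‖ := h1
    _ ≤ 1 * 1 := by
        apply mul_le_mul h2 h4 (norm_nonneg _) zero_le_one
    _ = 1 := by ring
  have hinner : ∀ n : ℤ, inner (𝕜 := ℂ) (fourierLp (T := 1) 2 n) f2 = fourierCoeff (⇑F) n := by
    intro n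
    rw [← coe_fourierBasis, ← fourierBasis.repr_apply_apply, fourierBasis_repr, hf2def,
      fourierCoeff_toLp]
  have hcoeffF : ∀ n : ℤ, fourierCoeff (⇑F) n =
      (if 0 ≤ n then ca n.toNat else 0) + (starRingEnd ℂ) (if 0 ≤ -n then cb (-n).toNat else 0) := by
    intro n
    have hFfun : ⇑F = fun θ => Sa θ + (starRingEnd ℂ) (Sb θ) := funext hFθ
    have i1 : Integrable (fun t : AddCircle (1:ℝ) => fourier (-n) t • Sa t) haarAddCircle := by
      apply Continuous.integrable_of_hasCompactSupport
      · exact ((fourier (-n)).continuous).smul Sa.continuous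
      · exact HasCompactSupport.of_compactSpace _
    have i2 : Integrable (fun t : AddCircle (1:ℝ) => fourier (-n) t • (starRingEnd ℂ) (Sb t))
        haarAddCircle := by
      apply Continuous.integrable_of_hasCompactSupport
      · exact ((fourier (-n)).continuous).smul (Complex.continuous_conj.comp Sb.continuous)
      · exact HasCompactSupport.of_compactSpace _
    have hadd : fourierCoeff (⇑F) n = fourierCoeff (⇑Sa) n
        + fourierCoeff (fun θ : AddCircle (1:ℝ) => (starRingEnd ℂ) (Sb θ)) n := by
      rw [hFfun]
      unfold fourierCoeff
      simp only [smul_add]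
      exact integral_add i1 i2
    have hconj : fourierCoeff (fun θ : AddCircle (1:ℝ) => (starRingEnd ℂ) (Sb θ)) n
        = (starRingEnd ℂ) (fourierCoeff (⇑Sb) (-n)) := by
      unfold fourierCoeff
      rw [← integral_conj]
      congr 1; funext t
      simp [smul_eq_mul, map_mul, fourier_neg, neg_neg]
    rw [hadd, hconj, fourierCoeff_hasSum hSa n, fourierCoeff_hasSum hSb (-n)]
  have hρnorm : ∀ m : ℕ, ‖(ρ:ℂ) ^ m‖ = ρ ^ m := by
    intro m
    rw [norm_pow, Complex.norm_real, Real.norm_eq_abs, _root_.abs_of_nonneg hρ0]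
  refine ⟨fun n => ‖inner (𝕜 := ℂ) (fourierLp (T := 1) 2 n) f2‖ ^ 2,
    fun n => by positivity, (orthonormal_fourier (T := 1)).inner_products_summable f2, ?_, ?_, ?_⟩
  · calc _ ≤ ‖f2‖ ^ 2 := (orthonormal_fourier (T := 1)).tsum_inner_products_le f2
    _ ≤ 1 := by
        nlinarith [norm_nonneg f2]
  · intro k
    beta_reduce
    rw [hinner, hcoeffF]
    match k with
    | 0 =>
      norm_num
      simp [hca, hcb, hb0]
    | (k+1) =>
      have h1 : (0:ℤ) ≤ ((k+1:ℕ):ℤ) := by positivity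
      have h2 : ¬ (0:ℤ) ≤ -((k+1:ℕ):ℤ) := by omega
      rw [if_pos h1, if_neg h2, map_zero, add_zero, Int.toNat_natCast]
      rw [hca]
      simp only []
      rw [norm_mul, hρnorm]
  · intro k
    beta_reduce
    rw [hinner, hcoeffF]
    have h1 : ¬ (0:ℤ) ≤ (-(k:ℤ)-1) := by omega
    have h2 : (0:ℤ) ≤ -(-(k:ℤ)-1) := by omega
    have h3 : (-(-(k:ℤ)-1)).toNat = k + 1 := by omega
    rw [if_neg h1, if_pos h2, h3, zero_add, RCLike.norm_conj, hcb]
    simp only []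
    rw [norm_mul, hρnorm]

lemma aux_lp_nnreal (X Y : ℝ≥0) {p : ℝ} (hp : 1 ≤ p) :
    (X ^ p + Y ^ p) ^ (1/p) ≤ max ((2:ℝ≥0) ^ (1/p - 1/2)) 1 * (X^2 + Y^2) ^ ((1:ℝ)/2) := by
  have hp0 : (0:ℝ) < p := lt_of_lt_of_le one_pos hp
  have hX2 : X ^ (2:ℝ) = X ^ (2:ℕ) := by
    rw [← NNReal.rpow_natCast X 2]; norm_num
  have hY2 : Y ^ (2:ℝ) = Y ^ (2:ℕ) := by
    rw [← NNReal.rpow_natCast Y 2]; norm_num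
  have hhalf : ∀ u v : ℝ≥0, 2 * (1/2 * u + 1/2 * v) = u + v := by
    intro u v
    rw [mul_add, ← mul_assoc, ← mul_assoc]
    norm_num
  have hhalf2 : ∀ u v : ℝ≥0, 1/2 * u + 1/2 * v = (u + v)/2 := by
    intro u v
    rw [mul_comm, mul_one_div, mul_comm, mul_one_div, ← add_div]
  rcases le_total p 2 with hp2 | h2p
  · have hq : (1:ℝ) ≤ 2/p := by rw [le_div_iff₀ hp0]; linarith
    have h := NNReal.rpow_arith_mean_le_arith_mean2_rpow (1/2) (1/2) (X^p) (Y^p)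
      (add_halves 1) hq
    have e1 : (X^p)^(2/p) = X^(2:ℕ) := by
      rw [← NNReal.rpow_mul, show p * (2/p) = 2 by field_simp, hX2]
    have e2 : (Y^p)^(2/p) = Y^(2:ℕ) := by
      rw [← NNReal.rpow_mul, show p * (2/p) = 2 by field_simp, hY2]
    rw [e1, e2] at h
    have h2 : ((1/2 * (X^p) + 1/2 * (Y^p)) ^ ((2:ℝ)/p)) ^ (p/2)
        ≤ (1/2 * X^(2:ℕ) + 1/2 * Y^(2:ℕ)) ^ ((p:ℝ)/2) :=
      NNReal.rpow_le_rpow h (by positivity)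
    rw [← NNReal.rpow_mul, show (2/p) * (p/2) = 1 by field_simp, NNReal.rpow_one] at h2
    -- h2 : 1/2 * X^p + 1/2 * Y^p ≤ (1/2 * X^2 + 1/2 * Y^2) ^ (p/2)
    have h3 : X^p + Y^p ≤ 2 * ((1/2 : ℝ≥0) * X^(2:ℕ) + 1/2 * Y^(2:ℕ)) ^ ((p:ℝ)/2) := by
      have := mul_le_mul_right h2 (2:ℝ≥0)
      calc X^p + Y^p = 2 * (1/2 * X^p + 1/2 * Y^p) := (hhalf _ _).symm
      _ ≤ _ := this
    have h4 : (X^p + Y^p) ^ ((1:ℝ)/p)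
        ≤ (2 * ((1/2 : ℝ≥0) * X^(2:ℕ) + 1/2 * Y^(2:ℕ)) ^ ((p:ℝ)/2)) ^ ((1:ℝ)/p) :=
      NNReal.rpow_le_rpow h3 (by positivity)
    have e5 : (2 * ((1/2 : ℝ≥0) * X^(2:ℕ) + 1/2 * Y^(2:ℕ)) ^ ((p:ℝ)/2)) ^ ((1:ℝ)/p)
        = 2 ^ ((1:ℝ)/p - 1/2) * (X^(2:ℕ) + Y^(2:ℕ)) ^ ((1:ℝ)/2) := by
      rw [NNReal.mul_rpow, ← NNReal.rpow_mul, show (p/2) * (1/p) = 1/2 by field_simp]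
      have : (1/2 : ℝ≥0) * X^(2:ℕ) + 1/2 * Y^(2:ℕ) = (X^(2:ℕ) + Y^(2:ℕ)) / 2 := hhalf2 _ _
      rw [this, NNReal.div_rpow, NNReal.rpow_sub two_ne_zero]
      rw [div_mul_eq_mul_div, mul_comm, mul_div_assoc, mul_comm]
    calc (X^p + Y^p) ^ ((1:ℝ)/p) ≤ 2 ^ ((1:ℝ)/p - 1/2) * (X^(2:ℕ) + Y^(2:ℕ)) ^ ((1:ℝ)/2) :=
          e5 ▸ h4
    _ ≤ max ((2:ℝ≥0) ^ (1/p - 1/2)) 1 * (X^2 + Y^2) ^ ((1:ℝ)/2) :=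
          mul_le_mul_left (le_max_left _ _) _
  · have h := NNReal.rpow_add_rpow_le X Y two_pos h2p
    rw [show ((1:ℝ)/2) = 1/(2:ℝ) by norm_num] at h ⊢
    rw [hX2, hY2] at h
    calc (X ^ p + Y ^ p) ^ (1/p) ≤ (X^(2:ℕ) + Y^(2:ℕ)) ^ ((1:ℝ)/2) := h
    _ = 1 * (X^2 + Y^2) ^ ((1:ℝ)/2) := by rw [one_mul]
    _ ≤ _ := mul_le_mul_left (le_max_right _ _) _

lemma aux_lp {x y : ℝ} (hx : 0 ≤ x) (hy : 0 ≤ y) {p : ℝ} (hp : 1 ≤ p) :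
    (x ^ p + y ^ p) ^ (1 / p)
      ≤ max ((2:ℝ) ^ (1/p - 1/2)) 1 * Real.sqrt (x ^ 2 + y ^ 2) := by
  lift x to ℝ≥0 using hx
  lift y to ℝ≥0 using hy
  have key := aux_lp_nnreal x y hp
  have := NNReal.coe_le_coe.mpr key
  push_cast [NNReal.coe_rpow, NNReal.coe_max] at this
  rw [Real.sqrt_eq_rpow]
  push_cast
  convert this using 3 <;> norm_num

lemma partial_bound (a b : ℕ → ℂ) (h g : ℂ → ℂ)
    (hh : ∀ z : ℂ, ‖z‖ < 1 → HasSum (fun k : ℕ => a k * z ^ k) (h z))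
    (hg : ∀ z : ℂ, ‖z‖ < 1 → HasSum (fun k : ℕ => b k * z ^ k) (g z))
    (hb0 : b 0 = 0)
    (hbound : ∀ z : ℂ, ‖z‖ < 1 → ‖h z + (starRingEnd ℂ) (g z)‖ ≤ 1)
    (K : Finset ℕ) :
    ‖a 0‖^2 + ∑ k ∈ K, ((‖a (k+1)‖^2 + ‖b (k+1)‖^2)) ≤ 1 := by
  -- first, a bound for each ρ < 1
  have key : ∀ ρ : ℝ, 0 ≤ ρ → ρ < 1 →
      ‖a 0‖^2 + ∑ k ∈ K, ((‖a (k+1)‖ * ρ^(k+1))^2 + (‖b (k+1)‖ * ρ^(k+1))^2) ≤ 1 := by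
    intro ρ hρ0 hρ1
    obtain ⟨e, he0, hes, het, hea, heb⟩ := bessel_main a b h g hh hg hb0 hbound hρ0 hρ1
    have hinj1 : Set.InjOn (fun k : ℕ => ((k:ℤ)+1)) K := fun x _ y _ hxy => by
      simpa using hxy
    have hinj2 : Set.InjOn (fun k : ℕ => (-(k:ℤ)-1)) K := fun x _ y _ hxy => by
      simp only [] at hxy; omega
    set J : Finset ℤ := insert (0:ℤ)
      ((K.image fun k : ℕ => ((k:ℤ)+1)) ∪ (K.image fun k : ℕ => (-(k:ℤ)-1))) with hJ
    have hsumJ : ∑ n ∈ J, e n ≤ ∑' n, e n := Summable.sum_le_tsum J (fun n _ => he0 n) hes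
    have h0notin : (0:ℤ) ∉ (K.image fun k : ℕ => ((k:ℤ)+1)) ∪ (K.image fun k : ℕ => (-(k:ℤ)-1)) := by
      simp only [Finset.mem_union, Finset.mem_image, not_or, not_exists, not_and]
      constructor <;> (intro x hx; omega)
    have hdisj : Disjoint (K.image fun k : ℕ => ((k:ℤ)+1)) (K.image fun k : ℕ => (-(k:ℤ)-1)) := by
      rw [Finset.disjoint_left]
      intro n hn1 hn2
      simp only [Finset.mem_image] at hn1 hn2
      obtain ⟨x, _, hx⟩ := hn1
      obtain ⟨y, _, hy⟩ := hn2
      omega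
    have hJsum : ∑ n ∈ J, e n = e 0 + (∑ k ∈ K, e ((k:ℤ)+1) + ∑ k ∈ K, e (-(k:ℤ)-1)) := by
      rw [hJ, Finset.sum_insert h0notin, Finset.sum_union hdisj,
        Finset.sum_image (fun x hx y hy => hinj1 hx hy),
        Finset.sum_image (fun x hx y hy => hinj2 hx hy)]
    have he00 : e 0 = ‖a 0‖^2 := by
      have := hea 0
      simpa using this
    have heak : ∀ k : ℕ, e ((k:ℤ)+1) = (‖a (k+1)‖ * ρ^(k+1))^2 := by
      intro k
      have := hea (k+1)
      rw [← this]
      norm_num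
    calc ‖a 0‖^2 + ∑ k ∈ K, ((‖a (k+1)‖ * ρ^(k+1))^2 + (‖b (k+1)‖ * ρ^(k+1))^2)
        = ∑ n ∈ J, e n := by
          rw [hJsum, he00, Finset.sum_add_distrib]
          congr 1
          congr 1
          · exact Finset.sum_congr rfl fun k _ => (heak k).symm
          · exact Finset.sum_congr rfl fun k _ => (heb k).symm
    _ ≤ ∑' n, e n := hsumJ
    _ ≤ 1 := het
  -- now take the limit ρ → 1⁻
  have cont : Filter.Tendsto
      (fun ρ : ℝ => ‖a 0‖^2 + ∑ k ∈ K, ((‖a (k+1)‖ * ρ^(k+1))^2 + (‖b (k+1)‖ * ρ^(k+1))^2))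
      (nhdsWithin 1 (Set.Iio 1))
      (nhds (‖a 0‖^2 + ∑ k ∈ K, ((‖a (k+1)‖ * (1:ℝ)^(k+1))^2 + (‖b (k+1)‖ * (1:ℝ)^(k+1))^2))) := by
    apply Filter.Tendsto.mono_left _ nhdsWithin_le_nhds
    exact Continuous.tendsto (by continuity) 1
  have hev : ∀ᶠ ρ in nhdsWithin (1:ℝ) (Set.Iio 1),
      ‖a 0‖^2 + ∑ k ∈ K, ((‖a (k+1)‖ * ρ^(k+1))^2 + (‖b (k+1)‖ * ρ^(k+1))^2) ≤ 1 := by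
    filter_upwards [Ioo_mem_nhdsLT_of_mem (show (1:ℝ) ∈ Set.Ioc 0 1 from ⟨zero_lt_one, le_rfl⟩)]
      with ρ hρ
    exact key ρ hρ.1.le hρ.2
  have := le_of_tendsto cont hev
  simpa [mul_pow] using this

/-- Theorem 3 of Kayumov–Ponnusamy: `p`-Bohr-type estimate for a bounded harmonic
mapping `f = h + conj g` of the unit disk with `g(0) = 0`. -/
theorem harmonic_p_bohr_estimate
    (a b : ℕ → ℂ) (h g : ℂ → ℂ)
    (hh : ∀ z : ℂ, ‖z‖ < 1 → HasSum (fun k : ℕ => a k * z ^ k) (h z))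
    (hg : ∀ z : ℂ, ‖z‖ < 1 → HasSum (fun k : ℕ => b k * z ^ k) (g z))
    (hb0 : b 0 = 0)
    (hbound : ∀ z : ℂ, ‖z‖ < 1 → ‖h z + (starRingEnd ℂ) (g z)‖ ≤ 1) :
    ∀ p : ℝ, 1 ≤ p → ∀ r : ℝ, 0 ≤ r → r < 1 →
      (∑' k : ℕ, (‖a (k + 1)‖ ^ p + ‖b (k + 1)‖ ^ p) ^ (1 / p) * r ^ (k + 1))
        ≤ max ((2 : ℝ) ^ (1 / p - 1 / 2)) 1 *
            Real.sqrt (1 - ‖a 0‖ ^ 2) * (r / Real.sqrt (1 - r ^ 2)) := by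
  intro p hp r hr0 hr1
  have hp0 : (0:ℝ) < p := lt_of_lt_of_le one_pos hp
  set t : ℕ → ℝ := fun k => ‖a (k+1)‖^2 + ‖b (k+1)‖^2 with hT
  have ht0 : ∀ k, 0 ≤ t k := fun k => by positivity
  have hpart : ∀ K : Finset ℕ, ∑ k ∈ K, t k ≤ 1 - ‖a 0‖^2 := by
    intro K
    have := partial_bound a b h g hh hg hb0 hbound K
    simp only [hT]
    linarith
  have hts : Summable t := summable_of_sum_le ht0 hpart
  have htle : ∑' k, t k ≤ 1 - ‖a 0‖^2 := Summable.tsum_le_of_sum_le hts hpart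
  have ha0 : ‖a 0‖^2 ≤ 1 := by
    have := hpart ∅
    simp only [Finset.sum_empty] at this
    linarith
  set M : ℝ := max ((2:ℝ) ^ (1/p - 1/2)) 1 with hM
  have hM0 : (0:ℝ) ≤ M := le_trans zero_le_one (le_max_right _ _)
  have ha01 : (0:ℝ) ≤ 1 - ‖a 0‖^2 := by linarith
  set c : ℕ → ℝ := fun k => (‖a (k+1)‖^p + ‖b (k+1)‖^p)^(1/p) with hc
  have hck : ∀ k, c k ≤ M * Real.sqrt (t k) := fun k =>
    aux_lp (norm_nonneg _) (norm_nonneg _) hp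
  have hc0 : ∀ k, 0 ≤ c k := fun k => by positivity
  have htk1 : ∀ k, Real.sqrt (t k) ≤ 1 := by
    intro k
    rw [show (1:ℝ) = Real.sqrt 1 by simp]
    apply Real.sqrt_le_sqrt
    have := Summable.le_tsum hts k (fun j _ => ht0 j)
    have h2 := sq_nonneg ‖a 0‖
    linarith
  have hq1 : r^2 < 1 := by nlinarith
  have hq0 : (0:ℝ) ≤ r^2 := sq_nonneg r
  have hgs : Summable (fun k : ℕ => (r^2)^(k+1)) := by
    have := (summable_geometric_of_lt_one hq0 hq1).mul_left (r^2)
    have he : (fun k : ℕ => r^2 * (r^2)^k) = fun k : ℕ => (r^2)^(k+1) := by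
      funext k; rw [← pow_succ']
    rwa [he] at this
  have hgeo : ∀ K : Finset ℕ, ∑ k ∈ K, (r^2)^(k+1) ≤ r^2/(1-r^2) := by
    intro K
    have h1 : ∑ k ∈ K, (r^2)^(k+1) ≤ ∑' k : ℕ, (r^2)^(k+1) :=
      Summable.sum_le_tsum K (fun k _ => by positivity) hgs
    have h2 : ∑' k : ℕ, (r^2)^(k+1) = r^2 * (1-r^2)⁻¹ := by
      have he : (fun k : ℕ => (r^2)^(k+1)) = fun k : ℕ => r^2 * (r^2)^k := by
        funext k; rw [← pow_succ']
      rw [he, tsum_mul_left, tsum_geometric_of_lt_one hq0 hq1]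
    rw [h2, ← div_eq_mul_inv] at h1
    exact h1
  -- summability of the LHS
  have hcs : Summable (fun k : ℕ => c k * r^(k+1)) := by
    apply Summable.of_nonneg_of_le (fun k => by positivity)
      (f := fun k : ℕ => (M * r) * r^k) (fun k => ?_)
      ((summable_geometric_of_lt_one hr0 hr1).mul_left (M*r))
    have h1 : c k ≤ M := le_trans (hck k) (by
      calc M * Real.sqrt (t k) ≤ M * 1 := mul_le_mul_of_nonneg_left (htk1 k) hM0
      _ = M := mul_one M)
    calc c k * r^(k+1) ≤ M * r^(k+1) :=
          mul_le_mul_of_nonneg_right h1 (by positivity)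
    _ = (M * r) * r^k := by ring
  -- main estimate
  apply Summable.tsum_le_of_sum_le hcs
  intro K
  have hCS := Finset.sum_mul_sq_le_sq_mul_sq K (fun k => Real.sqrt (t k)) (fun k => r^(k+1))
  have e1 : ∑ k ∈ K, (Real.sqrt (t k))^2 = ∑ k ∈ K, t k :=
    Finset.sum_congr rfl fun k _ => Real.sq_sqrt (ht0 k)
  have e2 : ∑ k ∈ K, (r^(k+1))^2 = ∑ k ∈ K, (r^2)^(k+1) :=
    Finset.sum_congr rfl fun k _ => by rw [← pow_mul, ← pow_mul, mul_comm]
  rw [e1, e2] at hCS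
  have hX0 : (0:ℝ) ≤ ∑ k ∈ K, Real.sqrt (t k) * r^(k+1) :=
    Finset.sum_nonneg fun k _ => by positivity
  have hY : (∑ k ∈ K, Real.sqrt (t k) * r^(k+1))^2 ≤ (1 - ‖a 0‖^2) * (r^2/(1-r^2)) := by
    calc (∑ k ∈ K, Real.sqrt (t k) * r^(k+1))^2
        ≤ (∑ k ∈ K, t k) * ∑ k ∈ K, (r^2)^(k+1) := hCS
    _ ≤ (1 - ‖a 0‖^2) * (r^2/(1-r^2)) := by
        apply mul_le_mul (hpart K) (hgeo K)
          (Finset.sum_nonneg fun k _ => by positivity) ha01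
  have hXle : ∑ k ∈ K, Real.sqrt (t k) * r^(k+1)
      ≤ Real.sqrt (1 - ‖a 0‖^2) * (r / Real.sqrt (1-r^2)) := by
    have h1 : ∑ k ∈ K, Real.sqrt (t k) * r^(k+1)
        = Real.sqrt ((∑ k ∈ K, Real.sqrt (t k) * r^(k+1))^2) :=
      (Real.sqrt_sq hX0).symm
    rw [h1]
    calc Real.sqrt ((∑ k ∈ K, Real.sqrt (t k) * r^(k+1))^2)
        ≤ Real.sqrt ((1 - ‖a 0‖^2) * (r^2/(1-r^2))) := Real.sqrt_le_sqrt hY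
    _ = Real.sqrt (1 - ‖a 0‖^2) * Real.sqrt (r^2/(1-r^2)) := Real.sqrt_mul ha01 _
    _ = Real.sqrt (1 - ‖a 0‖^2) * (r / Real.sqrt (1-r^2)) := by
        rw [Real.sqrt_div (sq_nonneg r), Real.sqrt_sq hr0]
  calc ∑ k ∈ K, c k * r^(k+1)
      ≤ ∑ k ∈ K, (M * Real.sqrt (t k)) * r^(k+1) :=
        Finset.sum_le_sum fun k _ => mul_le_mul_of_nonneg_right (hck k) (by positivity)
  _ = M * ∑ k ∈ K, Real.sqrt (t k) * r^(k+1) := by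
      rw [Finset.mul_sum]
      exact Finset.sum_congr rfl fun k _ => by ring
  _ ≤ M * (Real.sqrt (1 - ‖a 0‖^2) * (r / Real.sqrt (1-r^2))) :=
      mul_le_mul_of_nonneg_left hXle hM0
  _ = M * Real.sqrt (1 - ‖a 0‖^2) * (r / Real.sqrt (1-r^2)) := by ring
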